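/- Let H_s ∈ C¹ be nondecreasing with consecutive values c^n_{i−1} ≤ c^n_i, and let h₀ ∈ Lip_ρ(Ω) with h₀ ≤ c^n_0 on ∂Ω. Define recursively h^n_{i+1}(x) = min(max(h^n_i(x), c^n_{i+1} − d_Ω⁻(x)), c^n_{i+1} + d_Ω(x)) starting from h^n_0 = h₀. Then for every i, h^n_i(x) = max(h₀(x), c^n_i − d_Ω⁻(x)); i.e. the upper truncation by c^n_i + d_Ω is never active. -/

import Mathlib

set_option maxHeartbeats 1000000


open MeasureTheory Set RealInnerProductSpace
open scoped NNReal ENNReal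

/-- The polar set `K⁰ = {p : ⟪p,x⟫ ≤ 1 ∀ x ∈ K}`. -/
def polarSet {N : ℕ} (K : Set (EuclideanSpace ℝ (Fin N))) : Set (EuclideanSpace ℝ (Fin N)) :=
  {p | ∀ x ∈ K, ⟪p, x⟫ ≤ 1}

/-- `Ω` is a domain of class `C²`. -/
def IsC2Domain {N : ℕ} (Ω : Set (EuclideanSpace ℝ (Fin N))) : Prop :=
  ∀ x ∈ frontier Ω, ∃ (U : Set (EuclideanSpace ℝ (Fin N))) (f : EuclideanSpace ℝ (Fin N) → ℝ),
    x ∈ U ∧ IsOpen U ∧ ContDiffOn ℝ 2 f U ∧ (∀ y ∈ U, fderivWithin ℝ f U y ≠ 0) ∧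
    Ω ∩ U = {y ∈ U | f y < 0}

/-- The Minkowski distance from `∂Ω` induced by the gauge of `K⁰`. -/
noncomputable def mdist {N : ℕ} (K Ω : Set (EuclideanSpace ℝ (Fin N)))
    (x : EuclideanSpace ℝ (Fin N)) : ℝ :=
  sInf ((fun y => gauge (polarSet K) (x - y)) '' frontier Ω)

/-- The Minkowski distance from `∂Ω` induced by the gauge of `−K⁰`. -/
noncomputable def mdistNeg {N : ℕ} (K Ω : Set (EuclideanSpace ℝ (Fin N)))
    (x : EuclideanSpace ℝ (Fin N)) : ℝ :=
  sInf ((fun y => gauge (polarSet K) (y - x)) '' frontier Ω)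

lemma lip1d {f : ℝ → ℝ} {C : ℝ≥0} (hf : LipschitzWith C f) {S : ℝ}
    (hS : ∀ᵐ t : ℝ, t ∈ Set.Ioo (0:ℝ) 1 → ∃ y, y ≤ S ∧ HasDerivAt f y t) :
    f 1 - f 0 ≤ S := by
  set F : ℝ → ℝ := fun t => C * t - f t with hF
  have hmono : Monotone F := by
    intro s t hst
    have h1 : f t - f s ≤ C * (t - s) := by
      have := hf.dist_le_mul s t
      rw [Real.dist_eq, Real.dist_eq] at this
      have h2 : f t - f s ≤ |f s - f t| := by
        rw [abs_sub_comm]; exact le_abs_self _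
      calc f t - f s ≤ |f s - f t| := h2
        _ ≤ C * |s - t| := this
        _ = C * (t - s) := by rw [abs_sub_comm, abs_of_nonneg (by linarith)]
    simp only [F]
    nlinarith
  set μ := hmono.stieltjesFunction.measure with hμ
  set D : ℝ → ℝ := fun t => (μ.rnDeriv volume t).toReal with hD
  have hDer : ∀ᵐ t : ℝ, HasDerivAt F (D t) t := hmono.ae_hasDerivAt
  have hfc : Continuous f := hf.continuous
  have hFc : Continuous F := by fun_prop
  have hst : ∀ x, hmono.stieltjesFunction x = F x := by
    intro x
    rw [Monotone.stieltjesFunction_eq]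
    exact rightLim_eq_of_tendsto
      ((hFc.tendsto x).mono_left nhdsWithin_le_nhds)
  have hμIoc : μ (Ioc 0 1) = ENNReal.ofReal (F 1 - F 0) := by
    rw [hμ, StieltjesFunction.measure_Ioc, hst, hst]
  have hμfin : μ (Ioc 0 1) ≠ ⊤ := by rw [hμIoc]; exact ENNReal.ofReal_ne_top
  have hint : ∫ t in Ioc (0:ℝ) 1, D t ≤ (μ (Ioc 0 1)).toReal :=
    Measure.setIntegral_toReal_rnDeriv_le hμfin
  have hDint : IntegrableOn D (Ioc 0 1) volume :=
    Measure.integrableOn_toReal_rnDeriv hμfin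
  have hlow : ∀ᵐ t ∂(volume.restrict (Ioc (0:ℝ) 1)), (C : ℝ) - S ≤ D t := by
    have h1 : ∀ᵐ t : ℝ, t ∈ Ioo (0:ℝ) 1 → (C : ℝ) - S ≤ D t := by
      filter_upwards [hDer, hS] with t ht hs hmem
      obtain ⟨y, hyS, hy⟩ := hs hmem
      have h3 : HasDerivAt (fun s => (C:ℝ) * s - f s) ((C:ℝ) * 1 - y) t :=
        ((hasDerivAt_id t).const_mul (C:ℝ)).sub hy
      have h4 : D t = (C:ℝ) * 1 - y := ht.unique h3
      rw [h4]; linarith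
    have h2 : ∀ᵐ t ∂(volume.restrict (Ioc (0:ℝ) 1)), t ∈ Ioo (0:ℝ) 1 := by
      filter_upwards [ae_restrict_mem measurableSet_Ioc,
        measure_eq_zero_iff_ae_notMem.mp
          (by simp : (volume.restrict (Ioc (0:ℝ) 1)) {1} = 0)] with t h1' h2'
      exact ⟨h1'.1, lt_of_le_of_ne h1'.2 (by simpa using h2')⟩
    filter_upwards [ae_restrict_of_ae h1, h2] with t hA hB
    exact hA hB
  have hconst : ((C:ℝ) - S) ≤ ∫ t in Ioc (0:ℝ) 1, D t := by
    have h1 : ∫ _t in Ioc (0:ℝ) 1, ((C:ℝ) - S) ≤ ∫ t in Ioc (0:ℝ) 1, D t :=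
      integral_mono_ae (integrableOn_const (by simp)) hDint hlow
    simpa using h1
  have hfin : (C:ℝ) - S ≤ F 1 - F 0 := by
    have := hconst.trans hint
    rwa [hμIoc, ENNReal.toReal_ofReal (by have := hmono (by norm_num : (0:ℝ) ≤ 1); linarith)] at this
  simp only [F] at hfin
  linarith

lemma inner_le_gauge_polar {N : ℕ} {K : Set (EuclideanSpace ℝ (Fin N))}
    (hKb : Bornology.IsBounded K) {p u : EuclideanSpace ℝ (Fin N)} (hp : p ∈ K) :
    ⟪p, u⟫ ≤ gauge (polarSet K) u := by
  obtain ⟨R, hR⟩ := hKb.subset_closedBall 0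
  have hR0 : 0 ≤ max R 0 := le_max_right _ _
  rw [gauge_def]
  apply le_csInf
  · refine ⟨max R 0 * ‖u‖ + 1, Set.mem_Ioi.mpr (by positivity), ?_⟩
    have hr : (0:ℝ) < max R 0 * ‖u‖ + 1 := by positivity
    rw [Set.mem_smul_set_iff_inv_smul_mem₀ hr.ne']
    intro x hx
    have hxR : ‖x‖ ≤ max R 0 := by
      have := hR hx
      simp only [Metric.mem_closedBall, dist_zero_right] at this
      exact this.trans (le_max_left _ _)
    have h1 : ⟪(max R 0 * ‖u‖ + 1)⁻¹ • u, x⟫ = (max R 0 * ‖u‖ + 1)⁻¹ * ⟪u, x⟫ :=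
      real_inner_smul_left _ _ _
    rw [h1]
    have h2 : ⟪u, x⟫ ≤ ‖u‖ * ‖x‖ := real_inner_le_norm u x
    have h3 : ‖u‖ * ‖x‖ ≤ max R 0 * ‖u‖ + 1 := by nlinarith [norm_nonneg u, norm_nonneg x]
    rw [inv_mul_le_iff₀ hr, mul_one]
    linarith
  · rintro r ⟨hr, hmem⟩
    have hr0 : (0:ℝ) < r := hr
    rw [Set.mem_smul_set_iff_inv_smul_mem₀ hr0.ne'] at hmem
    have := hmem p hp
    have h1 : ⟪r⁻¹ • u, p⟫ = r⁻¹ * ⟪u, p⟫ := real_inner_smul_left _ _ _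
    rw [h1, inv_mul_le_iff₀ hr0, mul_one] at this
    rwa [real_inner_comm] at this

lemma ae_segment_avoid {N : ℕ} (B' : Set (EuclideanSpace ℝ (Fin N))) (hB'm : MeasurableSet B')
    (hB'0 : volume B' = 0) (a v : EuclideanSpace ℝ (Fin N)) :
    ∀ᵐ w : EuclideanSpace ℝ (Fin N), ∀ᵐ t : ℝ, a + w + t • v ∉ B' := by
  set A : Set (EuclideanSpace ℝ (Fin N) × ℝ) := {z | a + z.1 + z.2 • v ∈ B'} with hA
  have hAm : MeasurableSet A := by
    have hcont : Continuous fun z : EuclideanSpace ℝ (Fin N) × ℝ => a + z.1 + z.2 • v := by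
      fun_prop
    exact hcont.measurable hB'm
  have hA0 : (volume.prod (volume : Measure ℝ)) A = 0 := by
    rw [MeasureTheory.Measure.prod_apply_symm hAm]
    have : ∀ t : ℝ, volume ((fun w => (w, t)) ⁻¹' A) = 0 := by
      intro t
      have : ((fun w => (w, t)) ⁻¹' A) = (fun w => w + (a + t • v)) ⁻¹' B' := by
        ext w; simp [hA, add_comm, add_assoc, add_left_comm]
      rw [this, measure_preimage_add_right]
      exact hB'0
    simp [this]
  have := Measure.ae_ae_of_ae_prod ((measure_eq_zero_iff_ae_notMem).mp hA0)
  filter_upwards [this] with w hw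
  filter_upwards [hw] with t ht
  exact ht

lemma hit_frontier {N : ℕ} {Ω : Set (EuclideanSpace ℝ (Fin N))} (hΩopen : IsOpen Ω)
    {x y : EuclideanSpace ℝ (Fin N)} (hx : x ∈ Ω) (hy : y ∈ frontier Ω) :
    ∃ y₁ ∈ frontier Ω, (∀ s : ℝ, s ∈ Set.Ioo (0:ℝ) 1 → y₁ + s • (x - y₁) ∈ Ω) ∧
      ∃ t₁ : ℝ, 0 < t₁ ∧ t₁ ≤ 1 ∧ x - y₁ = t₁ • (x - y) := by
  have hy' : y ∈ closure Ω \ Ω := hΩopen.frontier_eq ▸ hy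
  set φ : ℝ → EuclideanSpace ℝ (Fin N) := fun t => x + t • (y - x) with hφ
  have hφc : Continuous φ := by fun_prop
  set T : Set ℝ := {t | t ∈ Set.Icc (0:ℝ) 1 ∧ φ t ∉ Ω} with hT
  have hφ1 : φ 1 = y := by simp [hφ]
  have hTne : (1:ℝ) ∈ T := ⟨⟨zero_le_one, le_refl 1⟩, by rw [hφ1]; exact hy'.2⟩
  have hTbdd : BddBelow T := ⟨0, fun t ht => ht.1.1⟩
  set t₁ := sInf T with ht₁
  have hpre : IsOpen (φ ⁻¹' Ω) := hφc.isOpen_preimage _ hΩopen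
  have h0pre : (0:ℝ) ∈ φ ⁻¹' Ω := by simp [hφ, hx]
  obtain ⟨η, hηpos, hη⟩ := Metric.isOpen_iff.mp hpre 0 h0pre
  have hlb : ∀ t ∈ T, η ≤ t := by
    intro t ht
    by_contra hlt
    push_neg at hlt
    have hmem : t ∈ Metric.ball (0:ℝ) η := by
      rw [Metric.mem_ball, Real.dist_eq, sub_zero, abs_of_nonneg ht.1.1]
      exact hlt
    exact ht.2 (hη hmem)
  have ht₁pos : 0 < t₁ := lt_of_lt_of_le hηpos (le_csInf ⟨1, hTne⟩ hlb)
  have ht₁le : t₁ ≤ 1 := csInf_le hTbdd hTne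
  have hin : ∀ t : ℝ, 0 ≤ t → t < t₁ → φ t ∈ Ω := by
    intro t ht0 htlt
    by_contra hnot
    have : t ∈ T := ⟨⟨ht0, htlt.le.trans ht₁le⟩, hnot⟩
    exact absurd (csInf_le hTbdd this) (not_le.mpr htlt)
  have hcl : φ t₁ ∈ closure Ω := by
    apply mem_closure_of_tendsto ((hφc.tendsto t₁).mono_left
      (nhdsWithin_le_nhds (s := Set.Iio t₁)))
    filter_upwards [Ioo_mem_nhdsLT_of_mem (Set.mem_Ioc.mpr ⟨ht₁pos, le_refl t₁⟩)] with t ht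
    exact hin t ht.1.le ht.2
  have hnotin : φ t₁ ∉ Ω := by
    intro hmem
    obtain ⟨η₂, hη₂pos, hη₂⟩ := Metric.isOpen_iff.mp hpre t₁ hmem
    have hlb2 : ∀ t ∈ T, t₁ + η₂ ≤ t := by
      intro t ht
      have h1 : t₁ ≤ t := csInf_le hTbdd ht
      by_contra hlt
      push_neg at hlt
      have hmem2 : t ∈ Metric.ball t₁ η₂ := by
        rw [Metric.mem_ball, Real.dist_eq, abs_of_nonneg (by linarith)]
        linarith
      exact ht.2 (hη₂ hmem2)
    have := le_csInf ⟨1, hTne⟩ hlb2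
    linarith
  refine ⟨φ t₁, ?_, ?_, t₁, ht₁pos, ht₁le, ?_⟩
  · rw [hΩopen.frontier_eq]; exact ⟨hcl, hnotin⟩
  · intro s hs
    have heq : φ t₁ + s • (x - φ t₁) = φ ((1 - s) * t₁) := by
      simp only [hφ]
      module
    rw [heq]
    apply hin
    · nlinarith [hs.1, hs.2, ht₁pos]
    · nlinarith [hs.1, hs.2, ht₁pos]
  · simp only [hφ]
    module

lemma seg_bound {N : ℕ} {Ω : Set (EuclideanSpace ℝ (Fin N))} (hΩopen : IsOpen Ω)
    {K : Set (EuclideanSpace ℝ (Fin N))} (hKb : Bornology.IsBounded K)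
    {h₀ : EuclideanSpace ℝ (Fin N) → ℝ} {C : ℝ≥0}
    (hh₀ : LipschitzOnWith C h₀ (closure Ω))
    (hh₀K : ∀ᵐ x ∂(volume.restrict Ω), gradient h₀ x ∈ K)
    {a b : EuclideanSpace ℝ (Fin N)} (ha : a ∈ closure Ω) (hb : b ∈ closure Ω)
    (hseg : ∀ t : ℝ, t ∈ Set.Ioo (0:ℝ) 1 → a + t • (b - a) ∈ Ω) :
    h₀ b - h₀ a ≤ gauge (polarSet K) (b - a) := by
  classical
  set S := gauge (polarSet K) (b - a) with hSdef
  -- the bad set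
  set P : EuclideanSpace ℝ (Fin N) → Prop :=
    fun z => DifferentiableAt ℝ h₀ z ∧ gradient h₀ z ∈ K with hPdef
  have hgood : ∀ᵐ z ∂(volume.restrict Ω), P z := by
    have h1 : ∀ᵐ z : EuclideanSpace ℝ (Fin N), z ∈ Ω → DifferentiableWithinAt ℝ h₀ Ω z :=
      LipschitzOnWith.ae_differentiableWithinAt_of_mem (hh₀.mono subset_closure)
    have h2 : ∀ᵐ z ∂(volume.restrict Ω), DifferentiableAt ℝ h₀ z := by
      filter_upwards [ae_restrict_of_ae h1, ae_restrict_mem hΩopen.measurableSet] with z hz hzΩ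
      exact (hz hzΩ).differentiableAt (hΩopen.mem_nhds hzΩ)
    filter_upwards [h2, hh₀K] with z hz1 hz2
    exact ⟨hz1, hz2⟩
  have hTnull : volume ({z | ¬ P z} ∩ Ω) = 0 := by
    rw [← Measure.restrict_apply' hΩopen.measurableSet]
    exact hgood
  set B' := toMeasurable volume ({z | ¬ P z} ∩ Ω) with hB'
  have hB'm : MeasurableSet B' := measurableSet_toMeasurable _ _
  have hB'0 : volume B' = 0 := by rw [hB', measure_toMeasurable]; exact hTnull
  have hB'sub : {z | ¬ P z} ∩ Ω ⊆ B' := subset_toMeasurable _ _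
  -- trivial case
  rcases eq_or_ne b a with hab | hab
  · rw [hab]; simp [hSdef]; exact gauge_nonneg _
  -- main estimate for fixed ε
  have main : ∀ ε : ℝ, ε ∈ Set.Ioo (0:ℝ) (1/2) →
      h₀ (a + (1 - ε) • (b - a)) - h₀ (a + ε • (b - a)) ≤ S := by
    intro ε hε
    set aε := a + ε • (b - a) with haε
    set bε := a + (1 - ε) • (b - a) with hbε
    set v := bε - aε with hv
    have hvval : v = (1 - 2*ε) • (b - a) := by
      simp only [hv, haε, hbε]
      rw [add_sub_add_left_eq_sub, ← sub_smul]
      ring_nf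
    -- the segment from aε to bε is inside Ω
    have hsub : ∀ t : ℝ, t ∈ Set.Icc (0:ℝ) 1 → aε + t • v ∈ Ω := by
      intro t ht
      have : aε + t • v = a + (ε + t * (1 - 2*ε)) • (b - a) := by
        rw [hvval, haε, smul_smul, add_assoc, ← add_smul]
      rw [this]
      apply hseg
      constructor
      · nlinarith [ht.1, ht.2, hε.1, hε.2]
      · nlinarith [ht.1, ht.2, hε.1, hε.2]
    -- compactness: thickening inside Ω
    have hcompact : IsCompact ((fun t : ℝ => aε + t • v) '' Set.Icc 0 1) :=
      (isCompact_Icc).image (by fun_prop)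
    obtain ⟨δ, hδpos, hδ⟩ := hcompact.exists_thickening_subset_open hΩopen
      (by rintro _ ⟨t, ht, rfl⟩; exact hsub t ht)
    -- the good set of perturbations
    set G : Set (EuclideanSpace ℝ (Fin N)) :=
      {w | ∀ᵐ t : ℝ, aε + w + t • v ∉ B'} with hG
    have hGae : ∀ᵐ w : EuclideanSpace ℝ (Fin N), w ∈ G :=
      ae_segment_avoid B' hB'm hB'0 aε v
    -- for each w in G with ‖w‖ < δ, the estimate holds
    have hstep : ∀ w ∈ G ∩ Metric.ball (0 : EuclideanSpace ℝ (Fin N)) δ,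
        h₀ (bε + w) - h₀ (aε + w) ≤ S := by
      intro w hw
      obtain ⟨hwG, hwb⟩ := hw
      have hwδ : ‖w‖ < δ := by simpa using hwb
      -- all clamped points are in Ω
      have hptΩ : ∀ t : ℝ, t ∈ Set.Icc (0:ℝ) 1 → aε + w + t • v ∈ Ω := by
        intro t ht
        apply hδ
        rw [Metric.mem_thickening_iff]
        refine ⟨aε + t • v, ⟨t, ht, rfl⟩, ?_⟩
        have : aε + w + t • v - (aε + t • v) = w := by abel
        rw [dist_eq_norm, this]
        exact hwδ
      -- the clamp function
      set cl : ℝ → ℝ := fun t => max 0 (min 1 t) with hcl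
      have hcl01 : ∀ t, cl t ∈ Set.Icc (0:ℝ) 1 := by
        intro t
        constructor
        · exact le_max_left _ _
        · simp only [hcl, max_le_iff]
          constructor
          · norm_num
          · exact min_le_left _ _
      have hclLip : LipschitzWith 1 cl := by
        apply LipschitzWith.const_max
        simpa using (LipschitzWith.id.const_min 1)
      set g : ℝ → ℝ := fun t => h₀ (aε + w + cl t • v) with hg
      have hgLip : LipschitzWith (C * ‖v‖₊) g := by
        apply LipschitzWith.of_dist_le_mul
        intro s t
        have hmem : ∀ r : ℝ, aε + w + cl r • v ∈ closure Ω :=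
          fun r => subset_closure (hptΩ (cl r) (hcl01 r))
        have h1 := hh₀.dist_le_mul _ (hmem s) _ (hmem t)
        have h2 : dist (aε + w + cl s • v) (aε + w + cl t • v) ≤ ‖v‖ * dist s t := by
          rw [dist_eq_norm]
          have : aε + w + cl s • v - (aε + w + cl t • v) = (cl s - cl t) • v := by
            rw [sub_smul]; abel
          rw [this, norm_smul]
          have h3 : |cl s - cl t| ≤ dist s t := by
            have := hclLip.dist_le_mul s t
            rwa [NNReal.coe_one, one_mul, Real.dist_eq] at this
          calc ‖cl s - cl t‖ * ‖v‖ ≤ dist s t * ‖v‖ := by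
                apply mul_le_mul_of_nonneg_right _ (norm_nonneg v)
                rwa [Real.norm_eq_abs]
            _ = ‖v‖ * dist s t := mul_comm _ _
        calc dist (g s) (g t) ≤ C * dist (aε + w + cl s • v) (aε + w + cl t • v) := h1
          _ ≤ C * (‖v‖ * dist s t) :=
              mul_le_mul_of_nonneg_left h2 (NNReal.coe_nonneg C)
          _ = (C * ‖v‖₊ : ℝ≥0) * dist s t := by
              push_cast
              ring
      have hgS : ∀ᵐ t : ℝ, t ∈ Set.Ioo (0:ℝ) 1 → ∃ y, y ≤ S ∧ HasDerivAt g y t := by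
        filter_upwards [hwG] with t hBt ht01
        set z := aε + w + t • v with hz
        have hzΩ : z ∈ Ω := hptΩ t ⟨ht01.1.le, ht01.2.le⟩
        have hzP : P z := by
          by_contra hnP
          exact hBt (hB'sub ⟨hnP, hzΩ⟩)
        obtain ⟨hdiff, hgrad⟩ := hzP
        have hline : HasDerivAt (fun s : ℝ => aε + w + s • v) v t := by
          simpa using ((hasDerivAt_id t).smul_const v).const_add (aε + w)
        have hcomp : HasDerivAt (fun s : ℝ => h₀ (aε + w + s • v)) (fderiv ℝ h₀ z v) t :=
          hdiff.hasFDerivAt.comp_hasDerivAt t hline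
        have heq : g =ᶠ[nhds t] fun s : ℝ => h₀ (aε + w + s • v) := by
          filter_upwards [Ioo_mem_nhds ht01.1 ht01.2] with s hs
          have : cl s = s := by
            simp only [hcl]
            rw [min_eq_right hs.2.le, max_eq_right hs.1.le]
          simp only [hg, this]
        have hder : HasDerivAt g (fderiv ℝ h₀ z v) t :=
          hcomp.congr_of_eventuallyEq heq
        refine ⟨_, ?_, hder⟩
        have hgradeq : fderiv ℝ h₀ z v = ⟪gradient h₀ z, v⟫ := by
          have h1 : HasGradientAt h₀ (gradient h₀ z) z := hdiff.hasGradientAt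
          rw [hasGradientAt_iff_hasFDerivAt] at h1
          rw [h1.fderiv]
          exact InnerProductSpace.toDual_apply_apply
        rw [hgradeq]
        have h2 : ⟪gradient h₀ z, v⟫ ≤ gauge (polarSet K) v :=
          inner_le_gauge_polar hKb hgrad
        have h3 : gauge (polarSet K) v = (1 - 2*ε) * S := by
          rw [hvval, hSdef, gauge_smul_of_nonneg (by linarith [hε.2] : (0:ℝ) ≤ 1 - 2*ε)]
          rfl
        have h4 : (0:ℝ) ≤ S := gauge_nonneg _
        nlinarith [hε.1]
      have := lip1d hgLip hgS
      have hg1 : g 1 = h₀ (bε + w) := by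
        simp only [hg, hcl]
        norm_num
        rw [show aε + w + v = bε + w by rw [hv]; abel]
      have hg0 : g 0 = h₀ (aε + w) := by
        simp only [hg, hcl]
        norm_num
      rw [hg1, hg0] at this
      exact this
    -- pass to the limit w → 0
    have h0cl : (0 : EuclideanSpace ℝ (Fin N)) ∈
        closure (G ∩ Metric.ball (0 : EuclideanSpace ℝ (Fin N)) δ) := by
      rw [Metric.mem_closure_iff]
      intro r hr
      have hpos : (0:ℝ≥0∞) < volume (Metric.ball (0:EuclideanSpace ℝ (Fin N)) (min r δ)) :=
        Metric.measure_ball_pos volume _ (lt_min hr hδpos)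
      have hne : (Metric.ball (0:EuclideanSpace ℝ (Fin N)) (min r δ) ∩ G).Nonempty := by
        by_contra hcon
        rw [Set.not_nonempty_iff_eq_empty] at hcon
        have hsub2 : Metric.ball (0:EuclideanSpace ℝ (Fin N)) (min r δ) ⊆ {w | w ∉ G} := by
          intro w hwb
          by_contra hwG
          simp only [Set.mem_setOf_eq, not_not] at hwG
          exact Set.eq_empty_iff_forall_notMem.mp hcon w ⟨hwb, hwG⟩
        have := measure_mono_null hsub2 (ae_iff.mp hGae)
        exact absurd this hpos.ne'
      obtain ⟨w, hwb, hwG⟩ := hne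
      refine ⟨w, ⟨hwG, ?_⟩, ?_⟩
      · exact Metric.ball_subset_ball (min_le_right _ _) hwb
      · have := Metric.mem_ball.mp hwb
        rw [dist_comm] at this
        exact lt_of_lt_of_le this (min_le_left _ _)
    have hNeBot : (nhdsWithin (0 : EuclideanSpace ℝ (Fin N))
        (G ∩ Metric.ball (0 : EuclideanSpace ℝ (Fin N)) δ)).NeBot :=
      mem_closure_iff_nhdsWithin_neBot.mp h0cl
    have haεΩ : aε ∈ Ω := hseg ε ⟨hε.1, by linarith [hε.2]⟩
    have hbεΩ : bε ∈ Ω := hseg (1-ε) ⟨by linarith [hε.2], by linarith [hε.1]⟩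
    have hcont : ∀ p ∈ Ω, ContinuousAt h₀ p := by
      intro p hp
      exact (hh₀.continuousOn).continuousAt
        (mem_nhds_iff.mpr ⟨Ω, subset_closure, hΩopen, hp⟩)
    have hca : ContinuousAt (fun w : EuclideanSpace ℝ (Fin N) => h₀ (aε + w)) 0 := by
      have h1 : ContinuousAt (fun w : EuclideanSpace ℝ (Fin N) => aε + w) 0 := by fun_prop
      exact (by simpa using hcont aε haεΩ : ContinuousAt h₀ (aε + 0)).comp h1
    have hcb : ContinuousAt (fun w : EuclideanSpace ℝ (Fin N) => h₀ (bε + w)) 0 := by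
      have h1 : ContinuousAt (fun w : EuclideanSpace ℝ (Fin N) => bε + w) 0 := by fun_prop
      exact (by simpa using hcont bε hbεΩ : ContinuousAt h₀ (bε + 0)).comp h1
    have htend : Filter.Tendsto
        (fun w : EuclideanSpace ℝ (Fin N) => h₀ (bε + w) - h₀ (aε + w))
        (nhdsWithin 0 (G ∩ Metric.ball (0 : EuclideanSpace ℝ (Fin N)) δ))
        (nhds (h₀ bε - h₀ aε)) := by
      have := (hcb.sub hca).tendsto
      convert this.mono_left nhdsWithin_le_nhds using 2 <;> simp
    exact le_of_tendsto htend
      (Filter.eventually_iff_exists_mem.mpr ⟨G ∩ Metric.ball 0 δ, self_mem_nhdsWithin, hstep⟩)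
  -- pass to the limit ε → 0
  have hta : Filter.Tendsto (fun ε : ℝ => h₀ (a + ε • (b-a))) (nhdsWithin 0 (Set.Ioi 0))
      (nhds (h₀ a)) := by
    have hmap : Filter.Tendsto (fun ε : ℝ => a + ε • (b-a)) (nhdsWithin 0 (Set.Ioi 0))
        (nhdsWithin a (closure Ω)) := by
      rw [tendsto_nhdsWithin_iff]
      constructor
      · have hc : Continuous (fun ε : ℝ => a + ε • (b-a)) := by fun_prop
        have := (hc.tendsto 0).mono_left (nhdsWithin_le_nhds (s := Set.Ioi (0:ℝ)))
        simpa using this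
      · filter_upwards [Ioo_mem_nhdsGT_of_mem (Set.mem_Ico.mpr ⟨le_refl (0:ℝ), one_pos⟩)]
          with ε hε
        exact subset_closure (hseg ε hε)
    exact (hh₀.continuousOn a ha).tendsto.comp hmap
  have htb : Filter.Tendsto (fun ε : ℝ => h₀ (a + (1-ε) • (b-a))) (nhdsWithin 0 (Set.Ioi 0))
      (nhds (h₀ b)) := by
    have hmap : Filter.Tendsto (fun ε : ℝ => a + (1-ε) • (b-a)) (nhdsWithin 0 (Set.Ioi 0))
        (nhdsWithin b (closure Ω)) := by
      rw [tendsto_nhdsWithin_iff]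
      constructor
      · have hc : Continuous (fun ε : ℝ => a + (1-ε) • (b-a)) := by fun_prop
        have := (hc.tendsto 0).mono_left (nhdsWithin_le_nhds (s := Set.Ioi (0:ℝ)))
        simpa using this
      · filter_upwards [Ioo_mem_nhdsGT_of_mem (Set.mem_Ico.mpr ⟨le_refl (0:ℝ), one_pos⟩)]
          with ε hε
        exact subset_closure (hseg (1-ε) ⟨by linarith [hε.2], by linarith [hε.1]⟩)
    exact (hh₀.continuousOn b hb).tendsto.comp hmap
  have hfinal : Filter.Tendsto
      (fun ε : ℝ => h₀ (a + (1-ε) • (b-a)) - h₀ (a + ε • (b-a)))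
      (nhdsWithin 0 (Set.Ioi 0)) (nhds (h₀ b - h₀ a)) := htb.sub hta
  exact le_of_tendsto hfinal
    (Filter.eventually_iff_exists_mem.mpr
      ⟨Set.Ioo 0 (1/2), Ioo_mem_nhdsGT_of_mem (Set.mem_Ico.mpr ⟨le_refl (0:ℝ), by norm_num⟩),
        main⟩)

/-- for a nondecreasing sequence of external values `c i` and
`h₀ ∈ Lip_ρ(Ω)` with `h₀ ≤ c 0` on `∂Ω`, the recursion
`h_{i+1} = min(max(h_i, c_{i+1} − d_Ω⁻), c_{i+1} + d_Ω)` produces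
`h_i = max(h₀, c i − d_Ω⁻)` at every step `i ≥ 1`: the upper truncation is never active. -/
theorem discrete_steps_formula (N : ℕ) (hN : 0 < N)
    (Ω : Set (EuclideanSpace ℝ (Fin N)))
    (hΩopen : IsOpen Ω) (hΩbdd : Bornology.IsBounded Ω) (hΩne : Ω.Nonempty)
    (hΩconn : IsConnected Ω) (hΩC2 : IsC2Domain Ω)
    (K : Set (EuclideanSpace ℝ (Fin N)))
    (hKcomp : IsCompact K) (hKconv : Convex ℝ K)
    (hK0 : (0 : EuclideanSpace ℝ (Fin N)) ∈ interior K)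
    (c : ℕ → ℝ) (hc : Monotone c)
    (h₀ : EuclideanSpace ℝ (Fin N) → ℝ) (C : ℝ≥0)
    (hh₀ : LipschitzOnWith C h₀ (closure Ω))
    (hh₀K : ∀ᵐ x ∂(volume.restrict Ω), gradient h₀ x ∈ K)
    (hbc : ∀ y ∈ frontier Ω, h₀ y ≤ c 0)
    (hseq : ℕ → EuclideanSpace ℝ (Fin N) → ℝ)
    (hinit : hseq 0 = h₀)
    (hrec : ∀ i x, hseq (i + 1) x =
      min (max (hseq i x) (c (i + 1) - mdistNeg K Ω x)) (c (i + 1) + mdist K Ω x)) :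
    ∀ i, 1 ≤ i → ∀ x ∈ closure Ω,
      hseq i x = max (h₀ x) (c i - mdistNeg K Ω x) := by
  -- frontier is nonempty
  have hfront : (frontier Ω).Nonempty := by
    by_contra h
    rw [Set.not_nonempty_iff_eq_empty] at h
    have hclopen : IsClopen Ω := isClopen_iff_frontier_eq_empty.mpr h
    haveI : PreconnectedSpace (EuclideanSpace ℝ (Fin N)) :=
      ⟨(convex_univ (𝕜 := ℝ)).isPreconnected⟩
    have huniv : Ω = univ := hclopen.eq_univ hΩne
    rw [huniv] at hΩbdd
    obtain ⟨R, hR⟩ := isBounded_iff_forall_norm_le.mp hΩbdd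
    have he : ‖EuclideanSpace.single (⟨0, hN⟩ : Fin N) (1:ℝ)‖ = 1 := by
      rw [EuclideanSpace.norm_single]; norm_num
    have h1 := hR ((|R| + 1) • EuclideanSpace.single (⟨0, hN⟩ : Fin N) (1:ℝ)) (mem_univ _)
    rw [norm_smul, he, mul_one, Real.norm_eq_abs, abs_of_nonneg (by positivity)] at h1
    have := le_abs_self R
    linarith
  have hKbdd : Bornology.IsBounded K := hKcomp.isBounded
  have hd : ∀ x, 0 ≤ mdist K Ω x := by
    intro x
    apply Real.sInf_nonneg
    rintro r ⟨y, hy, rfl⟩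
    exact gauge_nonneg _
  have hdneg : ∀ x, 0 ≤ mdistNeg K Ω x := by
    intro x
    apply Real.sInf_nonneg
    rintro r ⟨y, hy, rfl⟩
    exact gauge_nonneg _
  -- key upper bound: h₀ ≤ c 0 + mdist
  have hkey : ∀ x ∈ closure Ω, h₀ x ≤ c 0 + mdist K Ω x := by
    intro x hxcl
    have hsInf : h₀ x - c 0 ≤ mdist K Ω x := by
      unfold mdist
      refine le_csInf ⟨gauge (polarSet K) (x - hfront.some),
        ⟨hfront.some, hfront.some_mem, rfl⟩⟩ ?_
      rintro r ⟨y, hy, rfl⟩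
      by_cases hxΩ : x ∈ Ω
      · obtain ⟨y₁, hy₁, hsegm, t₁, ht₁pos, ht₁le, hxy₁⟩ := hit_frontier hΩopen hxΩ hy
        have hy₁cl : y₁ ∈ closure Ω := frontier_subset_closure hy₁
        have h1 : h₀ x - h₀ y₁ ≤ gauge (polarSet K) (x - y₁) :=
          seg_bound hΩopen hKbdd hh₀ hh₀K hy₁cl hxcl hsegm
        have h2 : gauge (polarSet K) (x - y₁) = t₁ * gauge (polarSet K) (x - y) := by
          rw [hxy₁, gauge_smul_of_nonneg ht₁pos.le]
          rfl
        have h3 : (0:ℝ) ≤ gauge (polarSet K) (x - y) := gauge_nonneg _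
        have h4 := hbc y₁ hy₁
        nlinarith
      · have hxf : x ∈ frontier Ω := by
          rw [hΩopen.frontier_eq]; exact ⟨hxcl, hxΩ⟩
        have h5 := hbc x hxf
        have h6 : (0:ℝ) ≤ gauge (polarSet K) (x - y) := gauge_nonneg _
        linarith
    linarith
  -- the induction
  have main : ∀ i, ∀ x ∈ closure Ω, hseq (i+1) x = max (h₀ x) (c (i+1) - mdistNeg K Ω x) := by
    intro i
    induction i with
    | zero =>
      intro x hx
      rw [hrec 0 x, hinit]
      apply min_eq_left
      apply max_le
      · have h1 := hkey x hx
        have h2 := hc (Nat.zero_le 1)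
        have h3 := hd x
        linarith
      · have h1 := hdneg x
        have h2 := hd x
        linarith
    | succ j ih =>
      intro x hx
      rw [hrec (j+1) x, ih x hx]
      have hfold : max (max (h₀ x) (c (j+1) - mdistNeg K Ω x)) (c (j+1+1) - mdistNeg K Ω x)
          = max (h₀ x) (c (j+1+1) - mdistNeg K Ω x) := by
        rw [max_assoc]
        congr 1
        apply max_eq_right
        have := hc (by omega : j+1 ≤ j+1+1)
        linarith
      rw [hfold]
      apply min_eq_left
      apply max_le
      · have h1 := hkey x hx
        have h2 := hc (Nat.zero_le (j+1+1))
        have h3 := hd x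
        linarith
      · have h1 := hdneg x
        have h2 := hd x
        linarith
  intro i hi x hx
  obtain ⟨j, rfl⟩ : ∃ j, i = j + 1 := ⟨i - 1, (Nat.succ_pred_eq_of_pos hi).symm⟩
  exact main j x hx
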